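/- Under the hypotheses on f, g, P of the Jacobian lemma (differentiability at X and marginal constraints P(X')·1_m = a, P(X')ᵀ·1_n = b in a neighborhood of X), define the gradient field G(X) ∈ ℝ^{n×d} by G(X)_{k,t} = 2·Σ_{j=1}^m P(X)_{kj}·(x_{k,t} − y_{j,t}). Then G is differentiable at X and for all k, s ∈ {1,…,n} and t, l ∈ {1,…,d}: ∂G_{k,t}/∂x_{s,l} = (1/ε)·Σ_{j=1}^m 2(x_{k,t} − y_{j,t})·P_{kj}·(∂f_k/∂x_{s,l} + ∂g_j/∂x_{s,l}) + 2·a_k·δ_{ks}·δ_{tl} − (4/ε)·δ_{ks}·Σ_{j=1}^m P_{kj}·(x_{k,t} − y_{j,t})·(x_{k,l} − y_{j,l}), where P = P(X). -/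

import Mathlib

/-- Entrywise Hessian decomposition of entropic OT. Under the hypotheses of
the implicit-Jacobian lemma, the gradient field
`G(X)_{k,t} = 2 Σ_j P(X)_{kj}(x_{k,t} − y_{j,t})` is differentiable at `X` and
`∂G_{k,t}/∂x_{s,l}` splits into the implicit term (through the potential
Jacobians) and the explicit block-diagonal term. -/
theorem hessian_entrywise_decomposition
    (n m d : ℕ)
    (Y : Fin m → Fin d → ℝ)
    (a : Fin n → ℝ) (ha : ∀ i, 0 < a i)
    (b : Fin m → ℝ) (hb : ∀ j, 0 < b j)
    (ε : ℝ) (hε : 0 < ε)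
    (f : (Fin n → Fin d → ℝ) → Fin n → ℝ)
    (g : (Fin n → Fin d → ℝ) → Fin m → ℝ)
    (X : Fin n → Fin d → ℝ)
    (hf : DifferentiableAt ℝ f X) (hg : DifferentiableAt ℝ g X)
    (Pfun : (Fin n → Fin d → ℝ) → Fin n → Fin m → ℝ)
    (hPfun : ∀ X' i j, Pfun X' i j
        = a i * b j * Real.exp ((f X' i + g X' j - ∑ t, (X' i t - Y j t) ^ 2) / ε))
    (hmarg : ∀ᶠ X' in nhds X,
        (∀ i, ∑ j, Pfun X' i j = a i) ∧ (∀ j, ∑ i, Pfun X' i j = b j))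
    (G : (Fin n → Fin d → ℝ) → Fin n → Fin d → ℝ)
    (hG : ∀ X' k t, G X' k t = 2 * ∑ j, Pfun X' k j * (X' k t - Y j t))
    (E : Fin n → Fin d → (Fin n → Fin d → ℝ))
    (hE : ∀ s l k' t', E s l k' t' = if k' = s ∧ t' = l then (1 : ℝ) else 0) :
    DifferentiableAt ℝ G X
    ∧ (∀ (k s : Fin n) (t l : Fin d),
        fderiv ℝ G X (E s l) k t
          = (1 / ε) * ∑ j, 2 * (X k t - Y j t) * Pfun X k j
                * (fderiv ℝ f X (E s l) k + fderiv ℝ g X (E s l) j)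
            + 2 * a k * (if k = s then (1 : ℝ) else 0)
                * (if t = l then (1 : ℝ) else 0)
            - (4 / ε) * (if k = s then (1 : ℝ) else 0)
                * ∑ j, Pfun X k j * (X k t - Y j t) * (X k l - Y j l)) := by
  classical
  -- evaluation continuous linear map
  set ev : Fin n → Fin d → ((Fin n → Fin d → ℝ) →L[ℝ] ℝ) := fun i t =>
    (ContinuousLinearMap.proj t).comp
      (ContinuousLinearMap.proj (R := ℝ) (φ := fun _ : Fin n => Fin d → ℝ) i) with hev_def
  have hev : ∀ (i : Fin n) (t : Fin d),
      HasFDerivAt (fun X' : Fin n → Fin d → ℝ => X' i t) (ev i t) X :=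
    fun i t => (ev i t).hasFDerivAt
  have hev_apply : ∀ (i : Fin n) (t : Fin d) (v : Fin n → Fin d → ℝ), ev i t v = v i t :=
    fun i t v => rfl
  -- derivatives of the potentials' components
  set Lf : Fin n → ((Fin n → Fin d → ℝ) →L[ℝ] ℝ) := fun i =>
    (ContinuousLinearMap.proj i).comp (fderiv ℝ f X) with hLf_def
  set Lg : Fin m → ((Fin n → Fin d → ℝ) →L[ℝ] ℝ) := fun j =>
    (ContinuousLinearMap.proj j).comp (fderiv ℝ g X) with hLg_def
  have hLf : ∀ i, HasFDerivAt (fun X' => f X' i) (Lf i) X := fun i =>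
    (ContinuousLinearMap.proj (R := ℝ) (φ := fun _ : Fin n => ℝ)
      i).hasFDerivAt.comp X hf.hasFDerivAt
  have hLg : ∀ j, HasFDerivAt (fun X' => g X' j) (Lg j) X := fun j =>
    (ContinuousLinearMap.proj (R := ℝ) (φ := fun _ : Fin m => ℝ)
      j).hasFDerivAt.comp X hg.hasFDerivAt
  -- derivative of the squared-distance cost
  have hcost : ∀ (k : Fin n) (j : Fin m),
      HasFDerivAt (fun X' : Fin n → Fin d → ℝ => ∑ t', (X' k t' - Y j t') ^ 2)
        (∑ t', (2 * (X k t' - Y j t')) • ev k t') X := by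
    intro k j
    apply HasFDerivAt.fun_sum
    intro t' _
    have h1 : HasFDerivAt (fun X' : Fin n → Fin d → ℝ => X' k t' - Y j t') (ev k t') X :=
      (hev k t').sub_const (Y j t')
    have h2 := h1.mul h1
    have hfun : (fun X' : Fin n → Fin d → ℝ => (X' k t' - Y j t') ^ 2)
        = fun X' => (X' k t' - Y j t') * (X' k t' - Y j t') := by
      funext X'; ring
    rw [hfun, two_mul, add_smul]
    exact h2
  -- derivative of the entry P_{kj}
  set DP : Fin n → Fin m → ((Fin n → Fin d → ℝ) →L[ℝ] ℝ) := fun k j =>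
    (a k * b j) •
      (Real.exp ((f X k + g X j - ∑ t', (X k t' - Y j t') ^ 2) / ε) •
        (ε⁻¹ • (Lf k + Lg j - ∑ t', (2 * (X k t' - Y j t')) • ev k t'))) with hDP_def
  have hP : ∀ (k : Fin n) (j : Fin m),
      HasFDerivAt (fun X' => Pfun X' k j) (DP k j) X := by
    intro k j
    have harg : HasFDerivAt
        (fun X' : Fin n → Fin d → ℝ =>
          (f X' k + g X' j - ∑ t', (X' k t' - Y j t') ^ 2) / ε)
        (ε⁻¹ • (Lf k + Lg j - ∑ t', (2 * (X k t' - Y j t')) • ev k t')) X := by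
      have h3 := (((hLf k).add (hLg j)).sub (hcost k j)).const_mul ε⁻¹
      have hfun : (fun X' : Fin n → Fin d → ℝ =>
          (f X' k + g X' j - ∑ t', (X' k t' - Y j t') ^ 2) / ε)
          = fun X' => ε⁻¹ * (f X' k + g X' j - ∑ t', (X' k t' - Y j t') ^ 2) := by
        funext X'; rw [div_eq_inv_mul]
      rw [hfun]
      exact h3
    have h4 := harg.exp.const_mul (a k * b j)
    have hfun : (fun X' => Pfun X' k j)
        = fun X' => a k * b j *
            Real.exp ((f X' k + g X' j - ∑ t', (X' k t' - Y j t') ^ 2) / ε) := by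
      funext X'; exact hPfun X' k j
    rw [hfun, hDP_def]
    exact h4
  -- derivative of each component of G
  set D : Fin n → Fin d → ((Fin n → Fin d → ℝ) →L[ℝ] ℝ) := fun k t =>
    (2 : ℝ) • ∑ j, ((Pfun X k j) • ev k t + (X k t - Y j t) • DP k j) with hD_def
  have hcomp : ∀ (k : Fin n) (t : Fin d),
      HasFDerivAt (fun X' => G X' k t) (D k t) X := by
    intro k t
    have hsum : HasFDerivAt
        (fun X' : Fin n → Fin d → ℝ => ∑ j, Pfun X' k j * (X' k t - Y j t))
        (∑ j, ((Pfun X k j) • ev k t + (X k t - Y j t) • DP k j)) X := by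
      apply HasFDerivAt.fun_sum
      intro j _
      exact (hP k j).mul ((hev k t).sub_const (Y j t))
    have hfun : (fun X' => G X' k t)
        = fun X' => 2 * ∑ j, Pfun X' k j * (X' k t - Y j t) := by
      funext X'; exact hG X' k t
    rw [hfun, hD_def]
    exact hsum.const_mul 2
  -- total derivative of G
  have hGd : HasFDerivAt G
      (ContinuousLinearMap.pi fun k => ContinuousLinearMap.pi fun t => D k t) X :=
    hasFDerivAt_pi.2 fun k => hasFDerivAt_pi.2 fun t => hcomp k t
  refine ⟨hGd.differentiableAt, ?_⟩
  intro k s t l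
  have hmargX := hmarg.self_of_nhds
  have hfd : fderiv ℝ G X = ContinuousLinearMap.pi fun k =>
      ContinuousLinearMap.pi fun t => D k t := hGd.fderiv
  rw [hfd]
  simp only [ContinuousLinearMap.pi_apply]
  -- evaluate D k t at E s l
  rw [hD_def]
  simp only [ContinuousLinearMap.smul_apply, ContinuousLinearMap.sum_apply,
    ContinuousLinearMap.add_apply, ContinuousLinearMap.sub_apply,
    ContinuousLinearMap.coe_comp', Function.comp_apply,
    ContinuousLinearMap.proj_apply, smul_eq_mul, hev_def, hLf_def, hLg_def, hDP_def]
  -- Kronecker deltas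
  have hδ : ∀ (k' : Fin n) (t' : Fin d),
      E s l k' t' = (if k' = s then (1:ℝ) else 0) * (if t' = l then (1:ℝ) else 0) := by
    intro k' t'
    rw [hE]
    by_cases h1 : k' = s <;> by_cases h2 : t' = l <;> simp [h1, h2]
  have hδsum : ∀ j : Fin m,
      (∑ t', 2 * (X k t' - Y j t') * E s l k t')
        = (if k = s then (1:ℝ) else 0) * (2 * (X k l - Y j l)) := by
    intro j
    by_cases h1 : k = s
    · simp only [hδ, h1, if_true, mul_one]
      rw [Finset.sum_eq_single l]
      · simp
      · intro t' _ ht'; simp [ht']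
      · intro h; exact absurd (Finset.mem_univ l) h
    · simp [hδ, h1]
  simp only [hδsum, hδ k t]
  -- now a purely algebraic identity between finite sums
  set c1 : ℝ := if k = s then (1:ℝ) else 0
  set c2 : ℝ := if t = l then (1:ℝ) else 0
  have hmid : 2 * a k * c1 * c2 = ∑ j, 2 * Pfun X k j * c1 * c2 := by
    rw [← hmargX.1 k, Finset.mul_sum, Finset.sum_mul, Finset.sum_mul]
  rw [hmid]
  simp only [hPfun]
  rw [Finset.mul_sum, Finset.mul_sum, Finset.mul_sum,
    ← Finset.sum_add_distrib, ← Finset.sum_sub_distrib]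
  refine Finset.sum_congr rfl fun j _ => ?_
  ring
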